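/- (In classical logic.) If 𝒱 and 𝒲 are basic neighborhood spaces whose quotient spaces 𝒱/≡ and 𝒲/≡ are homeomorphic, then 𝒱 and 𝒲 are isomorphic as natural spaces. -/

import Mathlib

/-! # Natural Topology: basic framework (Waaldijk) -/

/-- A pre-natural space: a countable set of basic dots with a decidable
pre-apartness `apart` and a decidable refinement partial order `refines`. -/
structure PreNaturalSpace (V : Type) : Type where
  countable' : Countable V
  apart : V → V → Prop
  refines : V → V → Prop
  apart_dec : DecidableRel apart
  refines_dec : DecidableRel refines
  apart_symm : ∀ a b, apart a b → apart b a
  apart_irrefl : ∀ a, ¬ apart a a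
  apart_mono : ∀ a b c, refines a b → apart c b → apart c a
  refines_refl : ∀ a, refines a a
  refines_trans : ∀ a b c, refines a b → refines b c → refines a c
  refines_antisymm : ∀ a b, refines a b → refines b a → a = b

namespace PreNaturalSpace

variable {V W : Type}

/-- `a ≺ b` : strict refinement. -/
def strict (P : PreNaturalSpace V) (a b : V) : Prop := P.refines a b ∧ a ≠ b

/-- A point is a shrinking sequence of dots deciding every apart pair of dots. -/
structure IsPoint (P : PreNaturalSpace V) (p : ℕ → V) : Prop where
  mono : ∀ n, P.refines (p (n + 1)) (p n)
  shrink : ∀ n, ∃ m, P.strict (p m) (p n)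
  decides : ∀ a b, P.apart a b → ∃ m, P.apart (p m) a ∨ P.apart (p m) b

/-- The set of points of a pre-natural space. -/
def Pt (P : PreNaturalSpace V) : Type := { p : ℕ → V // P.IsPoint p }

/-- `p` begins with the dot `a` : some `p m ≺ a`. -/
def begins (P : PreNaturalSpace V) (p : ℕ → V) (a : V) : Prop := ∃ m, P.strict (p m) a

/-- Apartness between a dot and a point. -/
def dApart (P : PreNaturalSpace V) (a : V) (p : ℕ → V) : Prop := ∃ m, P.apart (p m) a

/-- Apartness between points. -/
def pApart (P : PreNaturalSpace V) (p q : P.Pt) : Prop := ∃ n, P.apart (p.1 n) (q.1 n)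

/-- Equivalence of points: the negation of apartness. -/
def pEquiv (P : PreNaturalSpace V) (p q : P.Pt) : Prop := ¬ P.pApart p q

variable (P : PreNaturalSpace V)

lemma refines_of_le {p : ℕ → V} (hp : ∀ n, P.refines (p (n + 1)) (p n)) :
    ∀ {m k : ℕ}, m ≤ k → P.refines (p k) (p m) := by
  intro m k h
  induction h with
  | refl => exact P.refines_refl _
  | step h ih => exact P.refines_trans _ _ _ (hp _) ih

lemma begins_mono {z : ℕ → V} (hz : P.IsPoint z) {a b : V} (hab : P.refines a b)
    (h : P.begins z a) : P.begins z b := by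
  obtain ⟨j, hj1, hj2⟩ := h
  have hzb : P.refines (z j) b := P.refines_trans _ _ _ hj1 hab
  by_cases he : z j = b
  · obtain ⟨i, hi1, hi2⟩ := hz.shrink j
    exact ⟨i, P.refines_trans _ _ _ hi1 hzb, fun h' => hi2 (h'.trans he.symm)⟩
  · exact ⟨j, hzb, he⟩

/-- The natural (apartness) topology as a predicate on subsets of the point set. -/
def NatOpen (U : Set P.Pt) : Prop :=
  ∀ x ∈ U, ∀ y : P.Pt, P.pApart y x ∨ ∃ m, { z : P.Pt | P.begins z.1 (y.1 m) } ⊆ U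

instance instTopPt : TopologicalSpace P.Pt where
  IsOpen := P.NatOpen
  isOpen_univ := fun _ _ _ => Or.inr ⟨0, fun _ _ => trivial⟩
  isOpen_inter := by
    intro U U' hU hU' x hx y
    rcases hU x hx.1 y with h | ⟨m, hm⟩
    · exact Or.inl h
    rcases hU' x hx.2 y with h | ⟨k, hk⟩
    · exact Or.inl h
    refine Or.inr ⟨max m k, fun z hz => ⟨hm ?_, hk ?_⟩⟩
    · exact P.begins_mono z.2 (P.refines_of_le y.2.mono (le_max_left m k)) hz
    · exact P.begins_mono z.2 (P.refines_of_le y.2.mono (le_max_right m k)) hz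
  isOpen_sUnion := by
    intro S hS x hx y
    obtain ⟨U, hU, hxU⟩ := hx
    rcases hS U hU x hxU y with h | ⟨m, hm⟩
    · exact Or.inl h
    · exact Or.inr ⟨m, fun z hz => ⟨U, hU, hm hz⟩⟩

lemma pEquiv_refl (p : P.Pt) : P.pEquiv p p := fun ⟨_, h⟩ => P.apart_irrefl _ h

lemma pEquiv_symm {p q : P.Pt} (h : P.pEquiv p q) : P.pEquiv q p :=
  fun ⟨n, hn⟩ => h ⟨n, P.apart_symm _ _ hn⟩

lemma pEquiv_trans {p q r : P.Pt} (hpq : P.pEquiv p q) (hqr : P.pEquiv q r) :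
    P.pEquiv p r := by
  rintro ⟨n, hn⟩
  obtain ⟨m, hm⟩ := q.2.decides (p.1 n) (r.1 n) hn
  rcases hm with hm | hm
  · -- q.1 m apart from p.1 n
    refine hpq ⟨max m n, ?_⟩
    have h1 : P.apart (p.1 n) (q.1 (max m n)) :=
      P.apart_mono _ _ _ (P.refines_of_le q.2.mono (le_max_left m n)) (P.apart_symm _ _ hm)
    have h2 : P.apart (q.1 (max m n)) (p.1 (max m n)) :=
      P.apart_mono _ _ _ (P.refines_of_le p.2.mono (le_max_right m n)) (P.apart_symm _ _ h1)
    exact P.apart_symm _ _ h2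
  · refine hqr ⟨max m n, ?_⟩
    have h1 : P.apart (r.1 n) (q.1 (max m n)) :=
      P.apart_mono _ _ _ (P.refines_of_le q.2.mono (le_max_left m n)) (P.apart_symm _ _ hm)
    exact P.apart_mono _ _ _ (P.refines_of_le r.2.mono (le_max_right m n))
      (P.apart_symm _ _ h1)

/-- The setoid of points modulo `≡`. -/
def ptSetoid : Setoid P.Pt :=
  ⟨P.pEquiv, ⟨P.pEquiv_refl, P.pEquiv_symm, P.pEquiv_trans⟩⟩

/-- `â` : the set of points beginning with the dot `a`. -/
def hatSet (a : V) : Set P.Pt := { p | P.begins p.1 a }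

/-- `ā` : the `≡`-closure of `â`. -/
def barSet (a : V) : Set P.Pt := { p | ∃ q : P.Pt, P.begins q.1 a ∧ P.pEquiv p q }

/-- A natural space is basic-open when every `ā` is open. -/
def BasicOpen : Prop := ∀ a : V, IsOpen (P.barSet a)

/-- Existence of a maximal dot. -/
def HasMaxDot : Prop := ∃ m, ∀ a, P.refines a m

/-- Every basic dot begins at least one point. -/
def AllDotsInhabited : Prop := ∀ a : V, ∃ p : ℕ → V, P.IsPoint p ∧ P.begins p a

/-- The conditions making the point set of a pre-natural space a natural space. -/
def IsNaturalSpace : Prop := P.HasMaxDot ∧ P.AllDotsInhabited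

end PreNaturalSpace

/-- A refinement morphism between (pre-)natural spaces: a map on dots sending
points to points and reflecting apartness of points. -/
structure RefMorphism {V W : Type} (P : PreNaturalSpace V) (Q : PreNaturalSpace W) : Type where
  toFun : V → W
  maps_points : ∀ p : ℕ → V, P.IsPoint p → Q.IsPoint (fun n => toFun (p n))
  reflects_apart : ∀ p q : ℕ → V, P.IsPoint p → P.IsPoint q →
    (∃ n, Q.apart (toFun (p n)) (toFun (q n))) → ∃ n, P.apart (p n) (q n)

/-- The induced map on points of a refinement morphism. -/
def RefMorphism.pointMap {V W : Type} {P : PreNaturalSpace V} {Q : PreNaturalSpace W}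
    (f : RefMorphism P Q) (p : P.Pt) : Q.Pt :=
  ⟨fun n => f.toFun (p.1 n), f.maps_points p.1 p.2⟩

namespace PreNaturalSpace

variable {V W : Type} (P : PreNaturalSpace V)

/-- Restriction of a pre-natural space to a subset of dots. -/
noncomputable def restrict (S : Set V) : PreNaturalSpace S where
  countable' := by haveI := P.countable'; exact inferInstance
  apart a b := P.apart a.1 b.1
  refines a b := P.refines a.1 b.1
  apart_dec := Classical.decRel _
  refines_dec := Classical.decRel _
  apart_symm _ _ h := P.apart_symm _ _ h
  apart_irrefl a := P.apart_irrefl a.1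
  apart_mono _ _ _ h1 h2 := P.apart_mono _ _ _ h1 h2
  refines_refl a := P.refines_refl a.1
  refines_trans _ _ _ h1 h2 := P.refines_trans _ _ _ h1 h2
  refines_antisymm _ _ h1 h2 := Subtype.ext (P.refines_antisymm _ _ h1 h2)

/-! ## Trail spaces -/

/-- A `≺`-trail: a finite strictly refining sequence `a₀ ≻ a₁ ≻ …`. -/
def Trail : Type := { l : List V // l.Chain' fun a b => P.strict b a }

lemma strict_trans_flip : Transitive (fun a b : V => P.strict b a) := by
  rintro a b c ⟨h1, h1'⟩ ⟨h2, h2'⟩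
  refine ⟨P.refines_trans _ _ _ h2 h1, fun he => ?_⟩
  exact h2' (P.refines_antisymm _ _ h2 (he ▸ h1))

lemma last_refines_of_prefix {a b : List V}
    (ha : a.Chain' fun x y => P.strict y x) (hpre : b <+: a)
    {x y : V} (hx : x ∈ a.getLast?) (hy : y ∈ b.getLast?) :
    P.refines x y := by
  haveI : IsTrans V (fun x y : V => P.strict y x) := ⟨fun _ _ _ h1 h2 => P.strict_trans_flip h1 h2⟩
  have hpw : a.Pairwise fun x y => P.strict y x := List.isChain_iff_pairwise.mp ha
  obtain ⟨t, rfl⟩ := hpre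
  rcases eq_or_ne t [] with rfl | ht
  · rw [List.append_nil] at hx
    have : x = y := by
      rw [Option.mem_def] at hx hy
      exact Option.some_injective _ (hx ▸ hy ▸ rfl)
    exact this ▸ P.refines_refl x
  · rw [List.getLast?_append_of_ne_nil _ ht] at hx
    have hxt : x ∈ t := List.mem_of_mem_getLast? hx
    have hyb : y ∈ b := List.mem_of_mem_getLast? hy
    have := (List.pairwise_append.mp hpw).2.2 y hyb x hxt
    exact this.1

/-- The trail space of a pre-natural space: dots are `≺`-trails, with
`a ⊑* b` iff `b` is an initial segment of `a`, and `a #* b` iff the last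
dots of `a` and `b` are apart. -/
noncomputable def trailSpace : PreNaturalSpace P.Trail where
  countable' := by haveI := P.countable'; exact inferInstanceAs (Countable
    { l : List V // l.Chain' fun a b => P.strict b a })
  apart a b := ∃ x ∈ a.1.getLast?, ∃ y ∈ b.1.getLast?, P.apart x y
  refines a b := b.1 <+: a.1
  apart_dec := Classical.decRel _
  refines_dec := Classical.decRel _
  apart_symm := by
    rintro a b ⟨x, hx, y, hy, hxy⟩
    exact ⟨y, hy, x, hx, P.apart_symm _ _ hxy⟩
  apart_irrefl := by
    rintro a ⟨x, hx, y, hy, hxy⟩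
    rw [Option.mem_def] at hx hy
    have : x = y := Option.some_injective _ (hx ▸ hy ▸ rfl)
    exact P.apart_irrefl x (this ▸ hxy)
  apart_mono := by
    rintro a b c hab ⟨x, hx, y, hy, hxy⟩
    have hbne : b.1 ≠ [] := by
      intro h
      rw [h] at hy
      simp at hy
    have hane : a.1 ≠ [] := by
      intro h
      exact hbne (List.prefix_nil.mp (h ▸ hab))
    obtain ⟨z, hz⟩ : ∃ z, z ∈ a.1.getLast? := by
      rcases h : a.1.getLast? with _ | z
      · exact absurd (List.getLast?_eq_none_iff.mp h) hane
      · exact ⟨z, rfl⟩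
    have hzy : P.refines z y := P.last_refines_of_prefix a.2 hab hz hy
    exact ⟨x, hx, z, hz, P.apart_mono _ _ _ hzy hxy⟩
  refines_refl a := List.prefix_refl a.1
  refines_trans _ _ _ h1 h2 := h2.trans h1
  refines_antisymm a b h1 h2 :=
    Subtype.ext (h2.eq_of_length (le_antisymm h2.length_le h1.length_le))

end PreNaturalSpace

open Classical in
/-- `p♯(n)` : the `≺`-trail obtained from `p₀, …, p_{n-1}` by deleting repetitions
(for a shrinking sequence `p`, repetitions are consecutive). -/
noncomputable def segList {V : Type} (p : ℕ → V) : ℕ → List V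
  | 0 => []
  | n + 1 =>
    if (segList p n).getLast? = some (p n) then segList p n
    else segList p n ++ [p n]

namespace PreNaturalSpace

variable {V W : Type} (P : PreNaturalSpace V)

/-- The map on trail dots sending a nonempty trail to its last element and
the empty trail to `m`. -/
def lastDot (m : V) (q : P.Trail) : V := q.1.getLast?.getD m

/-- `g` is the point map induced by a trail morphism `f` (a refinement morphism
on the trail space): `g p = f (p♯(0)), f (p♯(1)), …`. -/
def InducedByTrailMorphism (Q : PreNaturalSpace W) (f : RefMorphism P.trailSpace Q)
    (g : P.Pt → Q.Pt) : Prop :=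
  ∀ p : P.Pt, ∃ t : P.trailSpace.Pt, (∀ n, (t.1 n).1 = segList p.1 n) ∧ g p = f.pointMap t

/-- `g` is a natural morphism map: induced by a refinement morphism or by a trail morphism. -/
def IsNaturalMorphismMap (Q : PreNaturalSpace W) (g : P.Pt → Q.Pt) : Prop :=
  (∃ f : RefMorphism P Q, ∀ p, g p = f.pointMap p) ∨
  (∃ f : RefMorphism P.trailSpace Q, P.InducedByTrailMorphism Q f g)

/-- Two natural spaces are isomorphic: natural morphisms both ways, inverse up to `≡`. -/
def AreIsomorphic (Q : PreNaturalSpace W) : Prop :=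
  ∃ (f : P.Pt → Q.Pt) (g : Q.Pt → P.Pt),
    P.IsNaturalMorphismMap Q f ∧ Q.IsNaturalMorphismMap P g ∧
    (∀ x, P.pEquiv (g (f x)) x) ∧ (∀ y, Q.pEquiv (f (g y)) y)

/-- A natural space is a basic neighborhood space iff it is isomorphic to a basic-open space. -/
def IsBasicNbhdSpace : Prop :=
  ∃ (W' : Type) (Q : PreNaturalSpace W'), Q.IsNaturalSpace ∧ Q.BasicOpen ∧ P.AreIsomorphic Q

/-! ## Trees, treas, spreads, spraids, fans -/

/-- `a` is a successor of `c`. -/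
def IsSucc (a c : V) : Prop := P.strict a c ∧ ∀ b, P.strict a b → P.refines b c → b = c

/-- A successor-trail (as a list, each entry a successor of the previous one). -/
def SuccChain (l : List V) : Prop := l.Chain' fun x y => P.IsSucc y x

/-- A successor-trail from `m` to `a`. -/
def IsSuccTrailFromTo (m a : V) (l : List V) : Prop :=
  P.SuccChain l ∧ l.head? = some m ∧ l.getLast? = some a

/-- `(V,⊑)` is a tree. -/
def IsTree : Prop :=
  ∃ m, (∀ a, P.refines a m) ∧ ∀ a, ∃! l : List V, P.IsSuccTrailFromTo m a l

/-- `(V,⊑)` is a trea. -/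
def IsTrea : Prop :=
  ∃ m, (∀ a, P.refines a m) ∧ (∀ a, { b | P.refines a b }.Finite) ∧
    ∀ a, ∃ g : ℕ, ∀ l : List V, P.IsSuccTrailFromTo m a l → l.length = g

/-- Every infinite successor-trail is a point. -/
def SuccTrailsArePoints : Prop :=
  ∀ q : ℕ → V, (∀ n, P.IsSucc (q (n + 1)) (q n)) → P.IsPoint q

def IsSpread : Prop := P.IsTree ∧ P.SuccTrailsArePoints

def IsSpraid : Prop := P.IsTrea ∧ P.SuccTrailsArePoints

/-- Finitely branching: every dot has finitely many successors. -/
def FinBranching : Prop := ∀ a : V, { b | P.IsSucc b a }.Finite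

def IsFan : Prop := P.IsSpread ∧ P.FinBranching

def IsFann : Prop := P.IsSpraid ∧ P.FinBranching

end PreNaturalSpace

/-! ### Auxiliary development for Statement 7 -/

namespace PreNaturalSpace

variable {V : Type} (P : PreNaturalSpace V)

lemma not_apart_self_refines {a b : V} (h : P.refines a b) : ¬ P.apart a b :=
  fun hab => P.apart_irrefl a (P.apart_mono a b a h hab)

lemma not_apart_of_lb {a b c : V} (ha : P.refines c a) (hb : P.refines c b) :
    ¬ P.apart a b := fun hab =>
  P.not_apart_self_refines ha (P.apart_symm _ _ (P.apart_mono c b a hb hab))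

lemma strict_of_strict_refines {a b c : V} (h1 : P.strict a b) (h2 : P.refines b c) :
    P.strict a c :=
  ⟨P.refines_trans _ _ _ h1.1 h2, fun he => h1.2 (P.refines_antisymm a b h1.1 (by
    rw [he]; exact h2))⟩

lemma refines_strict {a b c : V} (h1 : P.refines a b) (h2 : P.strict b c) : P.strict a c :=
  ⟨P.refines_trans _ _ _ h1 h2.1, fun he => h2.2 (P.refines_antisymm b c h2.1 (he ▸ h1))⟩

lemma apart_of_refines_apart {a b c : V} (h1 : P.refines a b) (h2 : P.apart b c) :
    P.apart a c :=
  P.apart_symm _ _ (P.apart_mono a b c h1 (P.apart_symm _ _ h2))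

lemma pApart_of_apart {p q : P.Pt} {m n : ℕ} (h : P.apart (p.1 m) (q.1 n)) : P.pApart p q := by
  refine ⟨max m n, ?_⟩
  have h1 : P.apart (p.1 m) (q.1 (max m n)) :=
    P.apart_mono _ _ _ (P.refines_of_le q.2.mono (le_max_right m n)) h
  exact P.apart_symm _ _
    (P.apart_mono _ _ _ (P.refines_of_le p.2.mono (le_max_left m n)) (P.apart_symm _ _ h1))

lemma point_dots_not_apart (p : P.Pt) (m n : ℕ) : ¬ P.apart (p.1 m) (p.1 n) :=
  P.not_apart_of_lb (P.refines_of_le p.2.mono (le_max_left m n))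
    (P.refines_of_le p.2.mono (le_max_right m n))

lemma pEquiv_forall {p q : P.Pt} (h : P.pEquiv p q) (m n : ℕ) :
    ¬ P.apart (p.1 m) (q.1 n) := fun hap => h (P.pApart_of_apart hap)

lemma shrink_ge (p : P.Pt) (n N : ℕ) : ∃ m, N ≤ m ∧ P.strict (p.1 m) (p.1 n) := by
  obtain ⟨k, hk⟩ := p.2.shrink n
  exact ⟨max k N, le_max_right _ _,
    P.refines_strict (P.refines_of_le p.2.mono (le_max_left k N)) hk⟩

lemma begins_self_dot (p : P.Pt) (n : ℕ) : P.begins p.1 (p.1 n) := p.2.shrink n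

lemma begins_max {m : V} (hm : ∀ a, P.refines a m) (p : P.Pt) : P.begins p.1 m := by
  obtain ⟨k, hk⟩ := p.2.shrink 0
  exact ⟨k, P.strict_of_strict_refines hk (hm _)⟩

lemma natOpen_saturated {U : Set P.Pt} (hU : P.NatOpen U) {x y : P.Pt} (hx : x ∈ U)
    (hxy : P.pEquiv y x) : y ∈ U := by
  rcases hU x hx y with hh | ⟨m, hm⟩
  · exact absurd hh hxy
  · exact hm (P.begins_self_dot y m)

lemma exists_hat_subset {U : Set P.Pt} (hU : P.NatOpen U) {x : P.Pt} (hx : x ∈ U) :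
    ∃ m, { z : P.Pt | P.begins z.1 (x.1 m) } ⊆ U := by
  rcases hU x hx x with hh | hh
  · exact absurd hh (P.pEquiv_refl x)
  · exact hh

lemma barSet_mem_of_equiv {a : V} {p q : P.Pt} (hp : p ∈ P.barSet a) (h : P.pEquiv q p) :
    q ∈ P.barSet a := by
  obtain ⟨r, hr1, hr2⟩ := hp
  exact ⟨r, hr1, P.pEquiv_trans h hr2⟩

/-! #### segList lemmas -/

open Classical in
lemma segList_succ_def (p : ℕ → V) (n : ℕ) :
    segList p (n + 1) =
      if (segList p n).getLast? = some (p n) then segList p n else segList p n ++ [p n] := rfl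

lemma getLast?_segList (p : ℕ → V) (n : ℕ) : (segList p (n + 1)).getLast? = some (p n) := by
  rw [segList_succ_def]
  split
  · assumption
  · simp [List.getLast?_append]

lemma segList_prefix_succ (p : ℕ → V) (n : ℕ) : segList p n <+: segList p (n + 1) := by
  rw [segList_succ_def]; split
  · exact List.prefix_refl _
  · exact ⟨[p n], rfl⟩

lemma segList_prefix_le (p : ℕ → V) {m n : ℕ} (h : m ≤ n) : segList p m <+: segList p n := by
  induction h with
  | refl => exact List.prefix_refl _
  | step _ ih => exact ih.trans (segList_prefix_succ p _)

lemma segList_congr {p q : ℕ → V} : ∀ {n : ℕ}, (∀ i < n, p i = q i) → segList p n = segList q n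
  | 0, _ => rfl
  | n + 1, h => by
    have ih : segList p n = segList q n := segList_congr (fun i hi => h i (Nat.lt_succ_of_lt hi))
    have hn : p n = q n := h n (Nat.lt_succ_self n)
    rw [segList_succ_def, segList_succ_def, ih, hn]

lemma chain'_segList {p : ℕ → V} (hp : ∀ n, P.refines (p (n + 1)) (p n)) :
    ∀ n, (segList p n).Chain' fun a b => P.strict b a := by
  intro n
  induction n with
  | zero => exact List.isChain_nil
  | succ n ih =>
    rw [segList_succ_def]
    split
    · exact ih
    · rename_i hne
      refine List.isChain_append.mpr ?_
      refine ⟨ih, List.isChain_singleton _, ?_⟩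
      intro x hx y hy
      simp only [List.head?_cons, Option.mem_def, Option.some.injEq] at hy
      subst hy
      match n, hx with
      | n + 1, hx =>
        rw [getLast?_segList] at hx
        rw [Option.mem_def, Option.some.injEq] at hx
        subst hx
        refine ⟨hp n, fun he => ?_⟩
        rw [getLast?_segList] at hne
        exact hne (by rw [he])
      | 0, hx => simp [segList] at hx

lemma segList_grows (p : P.Pt) (n : ℕ) :
    ∃ m, segList p.1 n <+: segList p.1 m ∧ segList p.1 n ≠ segList p.1 m := by
  match n with
  | 0 =>
    refine ⟨1, segList_prefix_le _ (by omega), ?_⟩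
    intro he
    have : (segList p.1 1).getLast? = some (p.1 0) := getLast?_segList p.1 0
    rw [← he] at this
    simp [segList] at this
  | n + 1 =>
    obtain ⟨j, hj1, hj2⟩ := P.shrink_ge p n (n + 1)
    refine ⟨j + 1, segList_prefix_le _ (by omega), fun he => ?_⟩
    have h1 := getLast?_segList p.1 n
    have h2 := getLast?_segList p.1 j
    rw [← he, h1, Option.some.injEq] at h2
    exact hj2.2 (by rw [h2])

/-- The canonical trail-space point associated to a point. -/
noncomputable def toTrailPt (p : P.Pt) : P.trailSpace.Pt :=
  ⟨fun n => ⟨segList p.1 n, P.chain'_segList p.2.mono n⟩, by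
    constructor
    · intro n
      exact segList_prefix_succ p.1 n
    · intro n
      obtain ⟨m, hm1, hm2⟩ := P.segList_grows p n
      exact ⟨m, hm1, fun he => absurd (congrArg Subtype.val he).symm hm2⟩
    · rintro a b ⟨x, hx, y, hy, hxy⟩
      obtain ⟨m, hm⟩ := p.2.decides x y hxy
      rcases hm with hm | hm
      · exact ⟨m + 1, Or.inl ⟨p.1 m, by rw [getLast?_segList]; rfl, x, hx, hm⟩⟩
      · exact ⟨m + 1, Or.inr ⟨p.1 m, by rw [getLast?_segList]; rfl, y, hy, hm⟩⟩⟩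

end PreNaturalSpace

namespace PreNaturalSpace

variable {V : Type} (P : PreNaturalSpace V)

lemma trailSpace_refines_iff (a b : P.Trail) : P.trailSpace.refines a b ↔ b.1 <+: a.1 :=
  Iff.rfl

lemma trailSpace_apart_iff (a b : P.Trail) :
    P.trailSpace.apart a b ↔ ∃ x ∈ a.1.getLast?, ∃ y ∈ b.1.getLast?, P.apart x y :=
  Iff.rfl

lemma trail_ne_nil_of_proper {a b : P.Trail} (hpre : a.1 <+: b.1) (hne : a.1 ≠ b.1) :
    b.1 ≠ [] := by
  intro h
  rw [h] at hpre
  exact hne ((List.prefix_nil.mp hpre).trans h.symm)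

lemma lastDot_mem {t : P.Trail} (h : t.1 ≠ []) (m : V) :
    P.lastDot m t ∈ t.1.getLast? := by
  rcases hl : t.1.getLast? with _ | x
  · exact absurd (List.getLast?_eq_none_iff.mp hl) h
  · simp [lastDot, hl]

lemma lastDot_refines_of_prefix (m : V) (hm : ∀ a, P.refines a m) {s t : P.Trail}
    (hpre : s.1 <+: t.1) : P.refines (P.lastDot m t) (P.lastDot m s) := by
  by_cases hs : s.1 = []
  · simp only [lastDot, hs, List.getLast?_nil, Option.getD_none]
    exact hm _
  · have ht : t.1 ≠ [] := fun h => by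
      rw [h] at hpre; exact hs (List.prefix_nil.mp hpre)
    exact P.last_refines_of_prefix t.2 hpre (P.lastDot_mem ht m) (P.lastDot_mem hs m)

lemma lastDot_strict_of_proper (m : V) {s t : P.Trail} (hs : s.1 ≠ [])
    (hpre : s.1 <+: t.1) (hne : s.1 ≠ t.1) : P.strict (P.lastDot m t) (P.lastDot m s) := by
  have ht : t.1 ≠ [] := P.trail_ne_nil_of_proper hpre hne
  haveI : IsTrans V (fun x y : V => P.strict y x) :=
    ⟨fun _ _ _ h1 h2 => P.strict_trans_flip h1 h2⟩
  have hpw : t.1.Pairwise fun x y => P.strict y x := List.isChain_iff_pairwise.mp t.2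
  obtain ⟨c, hc⟩ := hpre
  have hcne : c ≠ [] := by
    intro h; rw [h, List.append_nil] at hc; exact hne hc
  have hx : P.lastDot m s ∈ s.1.getLast? := P.lastDot_mem hs m
  have hy : P.lastDot m t ∈ t.1.getLast? := P.lastDot_mem ht m
  rw [← hc] at hy
  rw [List.getLast?_append_of_ne_nil _ hcne] at hy
  have hxt : P.lastDot m t ∈ c := List.mem_of_mem_getLast? hy
  have hyb : P.lastDot m s ∈ s.1 := List.mem_of_mem_getLast? hx
  have hpw' : (s.1 ++ c).Pairwise fun x y => P.strict y x := by rw [hc]; exact hpw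
  exact (List.pairwise_append.mp hpw').2.2 _ hyb _ hxt

lemma not_apart_max {m : V} (hm : ∀ a, P.refines a m) (x : V) : ¬ P.apart m x :=
  fun h => P.not_apart_self_refines (hm x) (P.apart_symm _ _ h)

lemma trailSpace_apart_of_lastDot {m : V} (hm : ∀ a, P.refines a m) {s t : P.Trail}
    (h : P.apart (P.lastDot m s) (P.lastDot m t)) : P.trailSpace.apart s t := by
  have hs : s.1 ≠ [] := by
    intro he
    simp only [lastDot, he, List.getLast?_nil, Option.getD_none] at h
    exact P.not_apart_max hm _ h
  have ht : t.1 ≠ [] := by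
    intro he
    simp only [lastDot, he, List.getLast?_nil, Option.getD_none] at h
    exact P.not_apart_max hm _ (P.apart_symm _ _ h)
  exact ⟨_, P.lastDot_mem hs m, _, P.lastDot_mem ht m, h⟩

/-- The last-dot sequence of a trail-space point is a point. -/
lemma isPoint_lastSeq {m : V} (hm : ∀ a, P.refines a m) {σ : ℕ → P.Trail}
    (hσ : P.trailSpace.IsPoint σ) : P.IsPoint fun n => P.lastDot m (σ n) := by
  constructor
  · intro n
    exact P.lastDot_refines_of_prefix m hm (hσ.mono n)
  · intro n
    obtain ⟨m1, hm1⟩ := hσ.shrink n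
    obtain ⟨m2, hm2⟩ := hσ.shrink m1
    have h1 : (σ n).1 <+: (σ m1).1 := hm1.1
    have hne1 : (σ n).1 ≠ (σ m1).1 := fun he => hm1.2 (Subtype.ext he.symm)
    have hs1 : (σ m1).1 ≠ [] := P.trail_ne_nil_of_proper h1 hne1
    have h2 : (σ m1).1 <+: (σ m2).1 := hm2.1
    have hne2 : (σ m1).1 ≠ (σ m2).1 := fun he => hm2.2 (Subtype.ext he.symm)
    refine ⟨m2, P.strict_of_strict_refines (P.lastDot_strict_of_proper m hs1 h2 hne2)
      (P.lastDot_refines_of_prefix m hm h1)⟩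
  · intro a b hab
    have hta : P.trailSpace.apart ⟨[a], List.isChain_singleton a⟩ ⟨[b], List.isChain_singleton b⟩ :=
      ⟨a, rfl, b, rfl, hab⟩
    obtain ⟨k, hk⟩ := hσ.decides _ _ hta
    rcases hk with ⟨x, hx, y, hy, hxy⟩ | ⟨x, hx, y, hy, hxy⟩
    · refine ⟨k, Or.inl ?_⟩
      simp only [List.getLast?_singleton, Option.mem_def, Option.some.injEq] at hy
      subst hy
      have : P.lastDot m (σ k) = x := by
        rw [lastDot, Option.mem_def.mp hx]; rfl
      rw [this]; exact hxy
    · refine ⟨k, Or.inr ?_⟩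
      simp only [List.getLast?_singleton, Option.mem_def, Option.some.injEq] at hy
      subst hy
      have : P.lastDot m (σ k) = x := by
        rw [lastDot, Option.mem_def.mp hx]; rfl
      rw [this]; exact hxy

/-- The point of `P` associated to a trail-space point. -/
noncomputable def lastPoint {m : V} (hm : ∀ a, P.refines a m) (σ : P.trailSpace.Pt) : P.Pt :=
  ⟨fun n => P.lastDot m (σ.1 n), P.isPoint_lastSeq hm σ.2⟩

lemma begins_lastPoint {m : V} (hm : ∀ a, P.refines a m) (σ : P.trailSpace.Pt) (n : ℕ) :
    P.begins (P.lastPoint hm σ).1 (P.lastDot m (σ.1 n)) :=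
  P.begins_self_dot (P.lastPoint hm σ) n

lemma lastPoint_toTrailPt_equiv {m : V} (hm : ∀ a, P.refines a m) (p : P.Pt) :
    P.pEquiv (P.lastPoint hm (P.toTrailPt p)) p := by
  rintro ⟨n, hn⟩
  match n, hn with
  | 0, hn =>
    have : P.lastDot m ((P.toTrailPt p).1 0) = m := by
      rw [lastDot]; simp [toTrailPt, segList]
    rw [show (P.lastPoint hm (P.toTrailPt p)).1 0 = P.lastDot m ((P.toTrailPt p).1 0) from rfl,
      this] at hn
    exact P.not_apart_max hm _ hn
  | k + 1, hn =>
    have : P.lastDot m ((P.toTrailPt p).1 (k + 1)) = p.1 k := by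
      rw [lastDot]
      have := getLast?_segList p.1 k
      rw [show ((P.toTrailPt p).1 (k+1)).1 = segList p.1 (k+1) from rfl, this]; rfl
    rw [show (P.lastPoint hm (P.toTrailPt p)).1 (k+1) = P.lastDot m ((P.toTrailPt p).1 (k+1))
      from rfl, this] at hn
    exact P.point_dots_not_apart p k (k + 1) hn

lemma toTrailPt_equiv_of_pEquiv {p q : P.Pt} (h : P.pEquiv p q) :
    P.trailSpace.pEquiv (P.toTrailPt p) (P.toTrailPt q) := by
  rintro ⟨n, x, hx, y, hy, hxy⟩
  match n, hx, hy with
  | k + 1, hx, hy =>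
    rw [show ((P.toTrailPt p).1 (k+1)).1 = segList p.1 (k+1) from rfl, getLast?_segList,
      Option.mem_def, Option.some.injEq] at hx
    rw [show ((P.toTrailPt q).1 (k+1)).1 = segList q.1 (k+1) from rfl, getLast?_segList,
      Option.mem_def, Option.some.injEq] at hy
    subst hx; subst hy
    exact P.pEquiv_forall h k k hxy
  | 0, hx, hy =>
    rw [show ((P.toTrailPt p).1 0).1 = segList p.1 0 from rfl] at hx
    simp [segList] at hx

end PreNaturalSpace

namespace PreNaturalSpace

lemma _root_.RefMorphism.pointMap_preserves {V W : Type} {P : PreNaturalSpace V}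
    {Q : PreNaturalSpace W} (M : RefMorphism P Q) {p q : P.Pt} (h : P.pEquiv p q) :
    Q.pEquiv (M.pointMap p) (M.pointMap q) :=
  fun hap => h (M.reflects_apart p.1 q.1 p.2 q.2 hap)

lemma exists_trailRef {V W : Type} {P : PreNaturalSpace V} {Q : PreNaturalSpace W}
    {v : P.Pt → Q.Pt} (hv : P.IsNaturalMorphismMap Q v) {m : V} (hm : ∀ a, P.refines a m) :
    ∃ M : RefMorphism P.trailSpace Q, ∀ z, Q.pEquiv (M.pointMap (P.toTrailPt z)) (v z) := by
  rcases hv with ⟨Vm, hVm⟩ | ⟨F, hF⟩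
  · refine ⟨{ toFun := fun t => Vm.toFun (P.lastDot m t)
              maps_points := fun σ hσ => Vm.maps_points _ (P.isPoint_lastSeq hm hσ)
              reflects_apart := fun σ σ' hσ hσ' hap =>
                Exists.imp (fun n hn => P.trailSpace_apart_of_lastDot hm hn)
                  (Vm.reflects_apart _ _ (P.isPoint_lastSeq hm hσ)
                    (P.isPoint_lastSeq hm hσ') hap) }, fun z => ?_⟩
    have he : RefMorphism.pointMap
        { toFun := fun t => Vm.toFun (P.lastDot m t)
          maps_points := fun σ hσ => Vm.maps_points _ (P.isPoint_lastSeq hm hσ)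
          reflects_apart := fun σ σ' hσ hσ' hap =>
            Exists.imp (fun n hn => P.trailSpace_apart_of_lastDot hm hn)
              (Vm.reflects_apart _ _ (P.isPoint_lastSeq hm hσ)
                (P.isPoint_lastSeq hm hσ') hap) } (P.toTrailPt z) =
        Vm.pointMap (P.lastPoint hm (P.toTrailPt z)) := Subtype.ext rfl
    rw [he, hVm z]
    exact Vm.pointMap_preserves (P.lastPoint_toTrailPt_equiv hm z)
  · refine ⟨F, fun z => ?_⟩
    obtain ⟨t, ht1, ht2⟩ := hF z
    have : t = P.toTrailPt z := Subtype.ext (funext fun n => Subtype.ext (ht1 n))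
    rw [ht2, this]
    exact Q.pEquiv_refl _

lemma morphismMap_preserves {V W : Type} {P : PreNaturalSpace V} {Q : PreNaturalSpace W}
    {v : P.Pt → Q.Pt} (hv : P.IsNaturalMorphismMap Q v) {m : V} (hm : ∀ a, P.refines a m)
    {p q : P.Pt} (h : P.pEquiv p q) : Q.pEquiv (v p) (v q) := by
  obtain ⟨M, hM⟩ := exists_trailRef hv hm
  have h1 := M.pointMap_preserves (P.toTrailPt_equiv_of_pEquiv h)
  exact Q.pEquiv_trans (Q.pEquiv_trans (Q.pEquiv_symm (hM p)) h1) (hM q)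

/-! #### splices -/

variable {V : Type} (P : PreNaturalSpace V)

def spliceSeq (y z : ℕ → V) (m j : ℕ) : ℕ → V :=
  fun n => if n ≤ m then y n else z (j + (n - (m + 1)))

lemma shrink_ge' {z : ℕ → V} (hz : P.IsPoint z) (i N : ℕ) :
    ∃ k, N ≤ k ∧ P.strict (z k) (z i) :=
  P.shrink_ge ⟨z, hz⟩ i N

lemma isPoint_splice {y z : ℕ → V} (hy : P.IsPoint y) (hz : P.IsPoint z) {m j : ℕ}
    (hj : P.strict (z j) (y m)) : P.IsPoint (spliceSeq y z m j) := by
  have hsp : ∀ k, j ≤ k → spliceSeq y z m j (m + 1 + (k - j)) = z k := by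
    intro k hk
    have h1 : ¬ (m + 1 + (k - j) ≤ m) := by omega
    simp only [spliceSeq, if_neg h1]
    congr 1
    omega
  constructor
  · intro n
    rcases Nat.lt_trichotomy n m with h | h | h
    · simp only [spliceSeq, if_pos (by omega : n + 1 ≤ m), if_pos (by omega : n ≤ m)]
      exact hy.mono n
    · subst h
      simp only [spliceSeq, if_neg (by omega : ¬ (n + 1 ≤ n)), if_pos (le_refl n)]
      have : n + 1 - (n + 1) = 0 := by omega
      rw [this]
      exact hj.1
    · simp only [spliceSeq, if_neg (by omega : ¬ (n + 1 ≤ m)), if_neg (by omega : ¬ (n ≤ m))]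
      have h2 : n + 1 - (m + 1) = (n - (m + 1)) + 1 := by omega
      rw [h2]
      exact hz.mono _
  · intro n
    by_cases h : n ≤ m
    · obtain ⟨k, hk1, hk2⟩ := P.shrink_ge' hz j j
      refine ⟨m + 1 + (k - j), ?_⟩
      rw [hsp k hk1]
      have h3 : P.strict (z k) (y m) := P.strict_of_strict_refines hk2 hj.1
      simp only [spliceSeq, if_pos h]
      exact P.strict_of_strict_refines h3 (P.refines_of_le hy.mono h)
    · set i := j + (n - (m + 1)) with hi
      obtain ⟨k, hk1, hk2⟩ := P.shrink_ge' hz i j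
      refine ⟨m + 1 + (k - j), ?_⟩
      rw [hsp k hk1]
      simp only [spliceSeq, if_neg h]
      exact hk2
  · intro a b hab
    obtain ⟨k, hk⟩ := hz.decides a b hab
    refine ⟨m + 1 + (max k j - j), ?_⟩
    rw [hsp (max k j) (le_max_right _ _)]
    have hr : P.refines (z (max k j)) (z k) := P.refines_of_le hz.mono (le_max_left _ _)
    rcases hk with hk | hk
    · exact Or.inl (P.apart_of_refines_apart hr hk)
    · exact Or.inr (P.apart_of_refines_apart hr hk)

lemma splice_equiv {y z : ℕ → V} (hy : P.IsPoint y) (hz : P.IsPoint z) {m j : ℕ}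
    (hj : P.strict (z j) (y m)) :
    P.pEquiv ⟨spliceSeq y z m j, P.isPoint_splice hy hz hj⟩ ⟨z, hz⟩ := by
  rintro ⟨n, hn⟩
  simp only [spliceSeq] at hn
  by_cases h : n ≤ m
  · rw [if_pos h] at hn
    have h1 : P.refines (z (max j n)) (y n) :=
      P.refines_trans _ _ _ (P.refines_trans _ _ _
        (P.refines_of_le hz.mono (le_max_left j n)) hj.1) (P.refines_of_le hy.mono h)
    have h2 : P.refines (z (max j n)) (z n) := P.refines_of_le hz.mono (le_max_right j n)
    exact P.not_apart_of_lb h1 h2 hn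
  · rw [if_neg h] at hn
    set i := j + (n - (m + 1)) with hi
    exact P.not_apart_of_lb (P.refines_of_le hz.mono (le_max_left i n))
      (P.refines_of_le hz.mono (le_max_right i n)) hn

lemma splice_segList {y z : ℕ → V} {m j : ℕ} {n : ℕ} (hn : n ≤ m + 1) :
    segList (spliceSeq y z m j) n = segList y n :=
  segList_congr fun i hi => by
    simp only [spliceSeq, if_pos (by omega : i ≤ m)]

/-! #### continuity of trail-induced maps -/

lemma natOpen_preimage_trail {V W : Type} (P : PreNaturalSpace V) (Q : PreNaturalSpace W)
    (M : RefMorphism P.trailSpace Q) {O : Set Q.Pt} (hO : Q.NatOpen O) :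
    P.NatOpen ((fun p => M.pointMap (P.toTrailPt p)) ⁻¹' O) := by
  intro x hx y
  by_cases hyx : P.pApart y x
  · exact Or.inl hyx
  · -- y ≡ x
    have hy_mem : M.pointMap (P.toTrailPt y) ∈ O := by
      refine Q.natOpen_saturated hO hx ?_
      exact M.pointMap_preserves (P.toTrailPt_equiv_of_pEquiv hyx)
    obtain ⟨k, hk⟩ := Q.exists_hat_subset hO hy_mem
    refine Or.inr ⟨k, ?_⟩
    rintro z ⟨i, hi⟩
    -- z begins y.1 k ; splice
    have hsp := P.isPoint_splice y.2 z.2 hi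
    set z' : P.Pt := ⟨spliceSeq y.1 z.1 k i, hsp⟩ with hz'
    have hzeq : P.pEquiv z' z := by
      have := P.splice_equiv y.2 z.2 hi
      exact this
    -- key : segList z' k = segList y k
    have hseg : segList z'.1 k = segList y.1 k := splice_segList (by omega)
    have hdot : (M.pointMap (P.toTrailPt z')).1 k = (M.pointMap (P.toTrailPt y)).1 k := by
      show M.toFun ((P.toTrailPt z').1 k) = M.toFun ((P.toTrailPt y).1 k)
      congr 1
      exact Subtype.ext hseg
    have hz'O : M.pointMap (P.toTrailPt z') ∈ O := by
      apply hk
      show Q.begins (M.pointMap (P.toTrailPt z')).1 ((M.pointMap (P.toTrailPt y)).1 k)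
      rw [← hdot]
      exact Q.begins_self_dot _ k
    have : M.pointMap (P.toTrailPt z) ∈ O :=
      Q.natOpen_saturated hO hz'O
        (M.pointMap_preserves (P.toTrailPt_equiv_of_pEquiv (P.pEquiv_symm hzeq)))
    exact this

end PreNaturalSpace

namespace PreNaturalSpace

/-- All data needed for the master construction of a trail morphism. -/
structure MasterData (VA VB VW : Type) : Type 1 where
  A : PreNaturalSpace VA
  B : PreNaturalSpace VB
  B0 : PreNaturalSpace VW
  u : B.Pt → B0.Pt
  Psi : Quotient A.ptSetoid → Quotient B.ptSetoid
  m0 : VW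
  mA : VA
  e : ℕ → VW × VW

namespace MasterData

variable {VA VB VW : Type} (M : MasterData VA VB VW)

/-- Classes whose chosen representative maps into `bar β`. -/
def Dset (β : VW) : Set (Quotient M.B.ptSetoid) :=
  { c | M.u (Quotient.out c) ∈ M.B0.barSet β }

/-- All points beginning with `a` have image class in `Dset β`. -/
def GoodD (a : VA) (β : VW) : Prop :=
  ∀ z : M.A.Pt, M.A.begins z.1 a → M.Psi (Quotient.mk M.A.ptSetoid z) ∈ M.Dset β

/-- The firing condition. -/
def CondF (a : VA) (β : VW) (s : ℕ) : Prop :=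
  ∃ β', M.B0.strict β' β ∧ M.GoodD a β' ∧
    (M.B0.apart (M.e s).1 (M.e s).2 → M.B0.apart β' (M.e s).1 ∨ M.B0.apart β' (M.e s).2)

open Classical in
/-- The recursive choice of a `B0`-dot and stage along a trail. -/
noncomputable def Frec : List VA → VW × ℕ := fun l =>
  if h : l = [] then (M.m0, 0)
  else
    let prev := Frec l.dropLast
    if hc : M.CondF (l.getLast h) prev.1 prev.2 then (hc.choose, prev.2 + 1) else prev
termination_by l => l.length
decreasing_by
  simp only [List.length_dropLast]
  have := List.length_pos_iff.mpr h
  omega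

open Classical in
/-- The deduplicated history of `Frec` values along a trail. -/
noncomputable def Grec : List VA → List VW := fun l =>
  if h : l = [] then [M.m0]
  else
    if (M.Frec l).1 = (M.Frec l.dropLast).1 then Grec l.dropLast
    else Grec l.dropLast ++ [(M.Frec l).1]
termination_by l => l.length
decreasing_by
  all_goals
    simp only [List.length_dropLast]
    have := List.length_pos_iff.mpr h
    omega

lemma Frec_nil : M.Frec [] = (M.m0, 0) := by rw [Frec]; simp

open Classical in
lemma Frec_concat (l : List VA) (a : VA) :
    M.Frec (l ++ [a]) =
      if hc : M.CondF a (M.Frec l).1 (M.Frec l).2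
      then (hc.choose, (M.Frec l).2 + 1) else M.Frec l := by
  rw [Frec]
  have h1 : l ++ [a] ≠ [] := by simp
  rw [dif_neg h1]
  simp [List.dropLast_concat, List.getLast_append]

lemma Grec_nil : M.Grec [] = [M.m0] := by rw [Grec]; simp

open Classical in
lemma Grec_concat (l : List VA) (a : VA) :
    M.Grec (l ++ [a]) =
      if (M.Frec (l ++ [a])).1 = (M.Frec l).1 then M.Grec l
      else M.Grec l ++ [(M.Frec (l ++ [a])).1] := by
  rw [Grec]
  have h1 : l ++ [a] ≠ [] := by simp
  rw [dif_neg h1]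
  simp only [List.dropLast_concat]

lemma Frec_refines_concat (l : List VA) (a : VA) :
    M.B0.refines (M.Frec (l ++ [a])).1 (M.Frec l).1 := by
  rw [Frec_concat]
  split
  · rename_i hc
    exact hc.choose_spec.1.1
  · exact M.B0.refines_refl _

lemma Frec_stage_concat (l : List VA) (a : VA) :
    (M.Frec l).2 ≤ (M.Frec (l ++ [a])).2 := by
  rw [Frec_concat]
  split
  · simp
  · exact le_refl _

lemma prefix_concat_cases {l' l : List VA} {a : VA} (h : l' <+: l ++ [a]) :
    l' <+: l ∨ l' = l ++ [a] := by
  rcases List.prefix_concat_iff.mp (by simpa using h) with h1 | h2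
  · exact Or.inr (by simpa using h1)
  · exact Or.inl h2

lemma Frec_refines_prefix {l' l : List VA} (h : l' <+: l) :
    M.B0.refines (M.Frec l).1 (M.Frec l').1 := by
  induction l using List.reverseRecOn with
  | nil =>
    rw [List.prefix_nil.mp h]
    exact M.B0.refines_refl _
  | append_singleton L a ih =>
    rcases prefix_concat_cases h with h1 | h2
    · exact M.B0.refines_trans _ _ _ (M.Frec_refines_concat L a) (ih h1)
    · rw [h2]; exact M.B0.refines_refl _

lemma Frec_stage_prefix {l' l : List VA} (h : l' <+: l) :
    (M.Frec l').2 ≤ (M.Frec l).2 := by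
  induction l using List.reverseRecOn with
  | nil => rw [List.prefix_nil.mp h]
  | append_singleton L a ih =>
    rcases prefix_concat_cases h with h1 | h2
    · exact le_trans (ih h1) (M.Frec_stage_concat L a)
    · rw [h2]

lemma Frec_eq_of_stage_eq {l' l : List VA} (h : l' <+: l)
    (hs : (M.Frec l').2 = (M.Frec l).2) : M.Frec l' = M.Frec l := by
  induction l using List.reverseRecOn with
  | nil => rw [List.prefix_nil.mp h]
  | append_singleton L a ih =>
    rcases prefix_concat_cases h with h1 | h2
    · have hL : (M.Frec l').2 ≤ (M.Frec L).2 := M.Frec_stage_prefix h1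
      rw [Frec_concat] at hs ⊢
      split at hs
      · rename_i hc
        exact absurd hs (by omega)
      · rename_i hc
        rw [dif_neg hc]
        exact ih h1 hs
    · rw [h2]

lemma Frec_strict_of_stage_lt {l' l : List VA} (h : l' <+: l)
    (hs : (M.Frec l').2 < (M.Frec l).2) : M.B0.strict (M.Frec l).1 (M.Frec l').1 := by
  induction l using List.reverseRecOn with
  | nil => rw [List.prefix_nil.mp h] at hs; omega
  | append_singleton L a ih =>
    rcases prefix_concat_cases h with h1 | h2
    · have hL : (M.Frec l').2 ≤ (M.Frec L).2 := M.Frec_stage_prefix h1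
      rw [Frec_concat] at hs ⊢
      split at hs
      · rename_i hc
        rw [dif_pos hc]
        rcases lt_or_eq_of_le hL with h3 | h3
        · exact M.B0.strict_of_strict_refines hc.choose_spec.1 (ih h1 h3).1
        · rw [M.Frec_eq_of_stage_eq h1 h3]
          exact hc.choose_spec.1
      · rename_i hc
        rw [dif_neg hc]
        exact ih h1 hs
    · rw [h2] at hs; omega

lemma getLast?_Grec (l : List VA) : (M.Grec l).getLast? = some (M.Frec l).1 := by
  induction l using List.reverseRecOn with
  | nil => rw [Grec_nil, Frec_nil]; rfl
  | append_singleton L a ih =>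
    rw [Grec_concat]
    split
    · rename_i he
      rw [ih, he]
    · simp [List.getLast?_append]

lemma Grec_prefix_concat (l : List VA) (a : VA) : M.Grec l <+: M.Grec (l ++ [a]) := by
  rw [Grec_concat]
  split
  · exact List.prefix_refl _
  · exact ⟨_, rfl⟩

lemma Grec_prefix {l' l : List VA} (h : l' <+: l) : M.Grec l' <+: M.Grec l := by
  induction l using List.reverseRecOn with
  | nil => rw [List.prefix_nil.mp h]
  | append_singleton L a ih =>
    rcases prefix_concat_cases h with h1 | h2
    · exact (ih h1).trans (M.Grec_prefix_concat L a)
    · rw [h2]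

lemma Grec_length (l : List VA) : (M.Grec l).length = (M.Frec l).2 + 1 := by
  induction l using List.reverseRecOn with
  | nil => rw [Grec_nil, Frec_nil]; rfl
  | append_singleton L a ih =>
    rw [Grec_concat, Frec_concat]
    by_cases hc : M.CondF a (M.Frec L).1 (M.Frec L).2
    · rw [dif_pos hc]
      rw [if_neg (by exact hc.choose_spec.1.2)]
      simp [ih]
    · rw [dif_neg hc, if_pos rfl]
      exact ih

lemma chain'_Grec {l : List VA} (hl : l.Chain' fun a b => M.A.strict b a) :
    (M.Grec l).Chain' fun a b => M.B0.strict b a := by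
  induction l using List.reverseRecOn with
  | nil => rw [Grec_nil]; exact List.isChain_singleton _
  | append_singleton L a ih =>
    have hL : L.Chain' fun a b => M.A.strict b a := hl.prefix ⟨[a], rfl⟩
    rw [Grec_concat]
    split
    · exact ih hL
    · rename_i hne
      refine List.isChain_append.mpr ?_
      refine ⟨ih hL, List.isChain_singleton _, ?_⟩
      intro x hx y hy
      rw [M.getLast?_Grec, Option.mem_def, Option.some.injEq] at hx
      simp only [List.head?_cons, Option.mem_def, Option.some.injEq] at hy
      subst hx; subst hy
      exact ⟨M.Frec_refines_concat L a, fun hh => hne hh⟩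

end MasterData

end PreNaturalSpace

namespace PreNaturalSpace

namespace MasterData

variable {VA VB VW : Type} (M : MasterData VA VB VW)

/-- Hypotheses for the master construction. -/
structure Hyp (M : MasterData VA VB VW) : Prop where
  hm0 : ∀ b, M.B0.refines b M.m0
  hmA : ∀ a, M.A.refines a M.mA
  hesurj : Function.Surjective M.e
  hDopen : ∀ β, IsOpen (M.Dset β)
  hPsi : Continuous M.Psi

variable {M}

lemma mem_Dset_m0 (H : M.Hyp) (c : Quotient M.B.ptSetoid) : c ∈ M.Dset M.m0 :=
  ⟨M.u c.out, M.B0.begins_max H.hm0 _, M.B0.pEquiv_refl _⟩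

lemma GoodD_mono {a a' : VA} {β : VW} (h : M.GoodD a β) (hr : M.A.refines a' a) :
    M.GoodD a' β := fun z hz => h z (M.A.begins_mono z.2 hr hz)

lemma natOpen_U (H : M.Hyp) (β : VW) :
    M.A.NatOpen ((fun p => M.Psi (Quotient.mk M.A.ptSetoid p)) ⁻¹' M.Dset β) := by
  have h1 : Continuous fun p : M.A.Pt => M.Psi (Quotient.mk M.A.ptSetoid p) :=
    H.hPsi.comp continuous_quot_mk
  exact h1.isOpen_preimage _ (H.hDopen β)

lemma ext_lemma (H : M.Hyp) (p : M.A.Pt) (β x y : VW)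
    (hp : M.Psi (Quotient.mk M.A.ptSetoid p) ∈ M.Dset β) :
    ∃ (m : ℕ) (β' : VW), M.B0.strict β' β ∧ M.GoodD (p.1 m) β' ∧
      (M.B0.apart x y → M.B0.apart β' x ∨ M.B0.apart β' y) := by
  obtain ⟨q, hqβ, hqe⟩ := hp
  obtain ⟨j, hj⟩ := hqβ
  have hk : ∃ k, M.B0.apart x y → M.B0.apart (q.1 k) x ∨ M.B0.apart (q.1 k) y := by
    by_cases hxy : M.B0.apart x y
    · obtain ⟨k, hk⟩ := q.2.decides x y hxy
      exact ⟨k, fun _ => hk⟩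
    · exact ⟨0, fun hh => absurd hh hxy⟩
  obtain ⟨k, hk⟩ := hk
  set N := max j k with hN
  set β' := q.1 N with hβ'
  have hstrict : M.B0.strict β' β :=
    M.B0.strict_of_strict_refines
      (M.B0.refines_strict (M.B0.refines_of_le q.2.mono (le_max_left j k)) hj) (M.B0.refines_refl _)
  have hpair : M.B0.apart x y → M.B0.apart β' x ∨ M.B0.apart β' y := by
    intro hxy
    have hr : M.B0.refines β' (q.1 k) := M.B0.refines_of_le q.2.mono (le_max_right j k)
    rcases hk hxy with hh | hh
    · exact Or.inl (M.B0.apart_of_refines_apart hr hh)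
    · exact Or.inr (M.B0.apart_of_refines_apart hr hh)
  have hmem : M.Psi (Quotient.mk M.A.ptSetoid p) ∈ M.Dset β' :=
    ⟨q, M.B0.begins_self_dot q N, hqe⟩
  obtain ⟨m, hm⟩ := M.A.exists_hat_subset (natOpen_U H β') hmem
  exact ⟨m, β', hstrict, fun z hz => hm hz, hpair⟩

lemma GoodD_Frec {l : List VA} (H : M.Hyp) (hl : l.Chain' fun a b => M.A.strict b a)
    (hne : l ≠ []) : M.GoodD (l.getLast hne) (M.Frec l).1 := by
  induction l using List.reverseRecOn with
  | nil => exact absurd rfl hne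
  | append_singleton L a ih =>
    have hlast : (L ++ [a]).getLast hne = a := by simp
    rw [hlast, Frec_concat]
    by_cases hc : M.CondF a (M.Frec L).1 (M.Frec L).2
    · rw [dif_pos hc]
      exact hc.choose_spec.2.1
    · rw [dif_neg hc]
      rcases eq_or_ne L [] with hL | hL
      · subst hL
        rw [Frec_nil]
        intro z _
        exact mem_Dset_m0 H _
      · have hstep : M.A.strict a (L.getLast hL) := by
          rcases List.isChain_append.mp hl with ⟨h1, _, h3⟩
          exact h3 _ (by rw [List.getLast?_eq_getLast hL]; rfl) a rfl
        exact GoodD_mono (ih (hl.prefix ⟨[a], rfl⟩) hL) hstep.1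

lemma condfires {l' l : List VA} (h : l' <+: l) (hne : l' ≠ l)
    (hcond : ∀ (L' : List VA) (a : VA), l' <+: L' → L' ++ [a] <+: l →
      M.Frec L' = M.Frec l' → M.CondF a (M.Frec l').1 (M.Frec l').2) :
    (M.Frec l').2 < (M.Frec l).2 := by
  induction l using List.reverseRecOn with
  | nil => exact absurd (List.prefix_nil.mp h) hne
  | append_singleton L a ih =>
    rcases prefix_concat_cases h with h1 | h2
    · rcases eq_or_ne l' L with hL | hL
      · have hc := hcond L a (by rw [hL]) (List.prefix_refl _) (by rw [hL])
        rw [← hL, Frec_concat, dif_pos hc]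
        omega
      · have hlt := ih h1 hL fun L' a' hp1 hp2 hF => hcond L' a' hp1 (hp2.trans ⟨[a], rfl⟩) hF
        exact lt_of_lt_of_le hlt (M.Frec_stage_concat L a)
    · exact absurd h2 hne

lemma mem_D_lastPoint (H : M.Hyp) (σ : M.A.trailSpace.Pt) (n : ℕ) :
    M.Psi (Quotient.mk M.A.ptSetoid (M.A.lastPoint H.hmA σ)) ∈
      M.Dset (M.Frec (σ.1 n).1).1 := by
  by_cases hne : (σ.1 n).1 = []
  · rw [hne, Frec_nil]
    exact mem_Dset_m0 H _
  · have hlastd : M.A.lastDot M.mA (σ.1 n) = (σ.1 n).1.getLast hne := by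
      rw [lastDot, List.getLast?_eq_getLast hne]; rfl
    exact GoodD_Frec H (σ.1 n).2 hne _ (hlastd ▸ M.A.begins_lastPoint H.hmA σ n)

lemma trail_prefix_mono (σ : M.A.trailSpace.Pt) {i k : ℕ} (hik : i ≤ k) :
    (σ.1 i).1 <+: (σ.1 k).1 :=
  M.A.trailSpace.refines_of_le σ.2.mono hik

lemma stage_increases (H : M.Hyp) (σ : M.A.trailSpace.Pt) (n₀ : ℕ) :
    ∃ n, (M.Frec (σ.1 n₀).1).2 < (M.Frec (σ.1 n).1).2 := by
  set pstar := M.A.lastPoint H.hmA σ with hpstar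
  set β := (M.Frec (σ.1 n₀).1).1 with hβ
  set s := (M.Frec (σ.1 n₀).1).2 with hs
  obtain ⟨m, β', hstrict, hgood, hpair⟩ :=
    ext_lemma H pstar β (M.e s).1 (M.e s).2 (mem_D_lastPoint H σ n₀)
  -- a deep nonempty stage
  obtain ⟨k₁, hk₁⟩ := σ.2.shrink (max n₀ m)
  set M₂ := max k₁ (max n₀ m) with hM₂
  have hk₁ne : (σ.1 k₁).1 ≠ [] :=
    M.A.trail_ne_nil_of_proper hk₁.1 fun he => hk₁.2 (Subtype.ext he.symm)
  have hM₂ne : (σ.1 M₂).1 ≠ [] := by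
    intro he
    have hpre : (σ.1 k₁).1 <+: (σ.1 M₂).1 := trail_prefix_mono σ (le_max_left _ _)
    rw [he] at hpre
    exact hk₁ne (List.prefix_nil.mp hpre)
  by_contra hcon
  push_neg at hcon
  have hstage : ∀ n, n₀ ≤ n → (M.Frec (σ.1 n).1).2 = s :=
    fun n hn => le_antisymm (hcon n) (M.Frec_stage_prefix (trail_prefix_mono σ hn))
  have hn₀M₂ : n₀ ≤ M₂ := le_trans (le_max_left _ _) (le_max_right _ _)
  have hmM₂ : m ≤ M₂ := le_trans (le_max_right _ _) (le_max_right _ _)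
  have hFM₂ : M.Frec (σ.1 n₀).1 = M.Frec (σ.1 M₂).1 :=
    M.Frec_eq_of_stage_eq (trail_prefix_mono σ hn₀M₂) (by rw [hstage M₂ hn₀M₂])
  -- a strictly deeper stage
  obtain ⟨k₂, hk₂⟩ := σ.2.shrink M₂
  set n := max k₂ M₂ with hn
  have hpre : (σ.1 M₂).1 <+: (σ.1 n).1 :=
    hk₂.1.trans (trail_prefix_mono σ (le_max_left _ _))
  have hlen : (σ.1 M₂).1.length < (σ.1 k₂).1.length := by
    rcases Nat.lt_or_ge (σ.1 M₂).1.length (σ.1 k₂).1.length with hh | hh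
    · exact hh
    · exact absurd (Subtype.ext (hk₂.1.eq_of_length (le_antisymm hk₂.1.length_le hh)).symm) hk₂.2
  have hnel : (σ.1 M₂).1 ≠ (σ.1 n).1 := by
    intro he
    have := (trail_prefix_mono σ (le_max_left k₂ M₂)).length_le
    rw [← he] at this
    omega
  have hfire := condfires (M := M) hpre hnel ?_
  · rw [hstage M₂ hn₀M₂, hstage n (le_trans hn₀M₂ (le_max_right _ _))] at hfire
    omega
  · intro L' a hp1 hp2 hFeq
    refine ⟨β', ?_, ?_, ?_⟩
    · rw [← hFM₂]
      exact hstrict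
    · -- GoodD a β'
      have hchain : (L' ++ [a]).Chain' fun a b => M.A.strict b a := (σ.1 n).2.prefix hp2
      have hL'ne : L' ≠ [] := by
        intro he
        rw [he] at hp1
        exact hM₂ne (List.prefix_nil.mp hp1)
      have ha : M.A.strict a (L'.getLast hL'ne) := by
        rcases List.isChain_append.mp hchain with ⟨_, _, h3⟩
        exact h3 _ (by rw [List.getLast?_eq_getLast hL'ne]; rfl) a rfl
      have h2 : M.A.refines (L'.getLast hL'ne) ((σ.1 M₂).1.getLast hM₂ne) :=
        M.A.last_refines_of_prefix (hchain.prefix ⟨[a], rfl⟩) hp1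
          (by rw [List.getLast?_eq_getLast hL'ne]; rfl)
          (by rw [List.getLast?_eq_getLast hM₂ne]; rfl)
      have h3 : (σ.1 M₂).1.getLast hM₂ne = pstar.1 M₂ := by
        show _ = M.A.lastDot M.mA (σ.1 M₂)
        rw [lastDot, List.getLast?_eq_getLast hM₂ne]; rfl
      have h4 : M.A.refines (pstar.1 M₂) (pstar.1 m) :=
        M.A.refines_of_le pstar.2.mono hmM₂
      have h5 : M.A.refines a (pstar.1 m) := by
        refine M.A.refines_trans _ _ _ (M.A.refines_trans _ _ _ ha.1 h2) ?_
        rw [h3]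
        exact h4
      exact GoodD_mono hgood h5
    · rw [← hFM₂]
      exact hpair

lemma stage_unbounded (H : M.Hyp) (σ : M.A.trailSpace.Pt) (s : ℕ) :
    ∃ n, s < (M.Frec (σ.1 n).1).2 := by
  induction s with
  | zero =>
    obtain ⟨n, hn⟩ := stage_increases H σ 0
    exact ⟨n, by omega⟩
  | succ s ih =>
    obtain ⟨n, hn⟩ := ih
    obtain ⟨n', hn'⟩ := stage_increases H σ n
    exact ⟨n', by omega⟩

lemma decide_record (l : List VA) (s : ℕ) (hs : s < (M.Frec l).2) :
    ∃ β'', (M.B0.apart (M.e s).1 (M.e s).2 →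
        M.B0.apart β'' (M.e s).1 ∨ M.B0.apart β'' (M.e s).2) ∧
      M.B0.refines (M.Frec l).1 β'' := by
  induction l using List.reverseRecOn with
  | nil => rw [Frec_nil] at hs; omega
  | append_singleton L a ih =>
    rw [Frec_concat] at hs ⊢
    by_cases hc : M.CondF a (M.Frec L).1 (M.Frec L).2
    · rw [dif_pos hc] at hs ⊢
      rcases Nat.lt_or_ge s (M.Frec L).2 with hlt | hge
      · obtain ⟨β'', hd, hr⟩ := ih hlt
        exact ⟨β'', hd, M.B0.refines_trans _ _ _ hc.choose_spec.1.1 hr⟩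
      · have : s = (M.Frec L).2 := by simp at hs; omega
        subst this
        exact ⟨hc.choose, hc.choose_spec.2.2, M.B0.refines_refl _⟩
    · rw [dif_neg hc] at hs ⊢
      exact ih hs

lemma mk_eq_of_pEquiv {V : Type} (P : PreNaturalSpace V) {p q : P.Pt} (h : P.pEquiv p q) :
    Quotient.mk P.ptSetoid p = Quotient.mk P.ptSetoid q :=
  Quotient.sound h

noncomputable def zetaSeq (σ : M.A.trailSpace.Pt) : ℕ → VW :=
  fun n => (M.Frec (σ.1 n).1).1

lemma isPoint_zeta (H : M.Hyp) (σ : M.A.trailSpace.Pt) : M.B0.IsPoint (M.zetaSeq σ) := by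
  constructor
  · intro n
    exact M.Frec_refines_prefix (trail_prefix_mono σ (Nat.le_succ n))
  · intro n
    obtain ⟨n', hn'⟩ := stage_unbounded H σ (M.Frec (σ.1 n).1).2
    refine ⟨max n n', ?_⟩
    refine M.Frec_strict_of_stage_lt (trail_prefix_mono σ (le_max_left _ _)) ?_
    have := M.Frec_stage_prefix (trail_prefix_mono σ (le_max_right n n'))
    omega
  · intro x y hxy
    obtain ⟨s, hs⟩ := H.hesurj (x, y)
    obtain ⟨n, hn⟩ := stage_unbounded H σ s
    obtain ⟨β'', hd, hr⟩ := decide_record (M := M) (σ.1 n).1 s hn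
    rw [hs] at hd
    rcases hd hxy with hh | hh
    · exact ⟨n, Or.inl (M.B0.apart_of_refines_apart hr hh)⟩
    · exact ⟨n, Or.inr (M.B0.apart_of_refines_apart hr hh)⟩

noncomputable def zetaPt (H : M.Hyp) (σ : M.A.trailSpace.Pt) : M.B0.Pt :=
  ⟨M.zetaSeq σ, isPoint_zeta H σ⟩

lemma zeta_equiv_ustar (H : M.Hyp) (σ : M.A.trailSpace.Pt) :
    M.B0.pEquiv (zetaPt H σ)
      (M.u ((M.Psi (Quotient.mk M.A.ptSetoid (M.A.lastPoint H.hmA σ))).out)) := by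
  rintro ⟨n, hap⟩
  obtain ⟨ξ, hξb, hξe⟩ := mem_D_lastPoint H σ n
  obtain ⟨j, hj⟩ := hξb
  have h1 := M.B0.apart_mono _ _ _ hj.1 (M.B0.apart_symm _ _ hap)
  exact hξe (M.B0.pApart_of_apart h1)

noncomputable def Gtrail (t : M.A.Trail) : M.B0.Trail :=
  ⟨M.Grec t.1, M.chain'_Grec t.2⟩

lemma isPoint_Gseq (H : M.Hyp) (σ : M.A.trailSpace.Pt) :
    M.B0.trailSpace.IsPoint fun n => M.Gtrail (σ.1 n) := by
  constructor
  · intro n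
    exact M.Grec_prefix (trail_prefix_mono σ (Nat.le_succ n))
  · intro n
    obtain ⟨n', hn'⟩ := stage_unbounded H σ (M.Frec (σ.1 n).1).2
    refine ⟨max n n', M.Grec_prefix (trail_prefix_mono σ (le_max_left _ _)), ?_⟩
    intro he
    have hlen := congrArg (fun t : M.B0.Trail => t.1.length) he
    simp only [Gtrail, M.Grec_length] at hlen
    have h1 := M.Frec_stage_prefix (trail_prefix_mono σ (le_max_right n n'))
    omega
  · rintro a b ⟨x, hx, y, hy, hxy⟩
    obtain ⟨s, hs⟩ := H.hesurj (x, y)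
    obtain ⟨n, hn⟩ := stage_unbounded H σ s
    obtain ⟨β'', hd, hr⟩ := decide_record (M := M) (σ.1 n).1 s hn
    rw [hs] at hd
    rcases hd hxy with hh | hh
    · exact ⟨n, Or.inl ⟨_, M.getLast?_Grec (σ.1 n).1, x, hx,
        M.B0.apart_of_refines_apart hr hh⟩⟩
    · exact ⟨n, Or.inr ⟨_, M.getLast?_Grec (σ.1 n).1, y, hy,
        M.B0.apart_of_refines_apart hr hh⟩⟩

lemma Gseq_not_apart_T0zeta (H : M.Hyp) (σ : M.A.trailSpace.Pt) (n : ℕ) :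
    ¬ M.B0.trailSpace.apart (M.Gtrail (σ.1 n)) ((M.B0.toTrailPt (zetaPt H σ)).1 n) := by
  rintro ⟨x, hx, y, hy, hxy⟩
  rw [show (M.Gtrail (σ.1 n)).1 = M.Grec (σ.1 n).1 from rfl, M.getLast?_Grec,
    Option.mem_def, Option.some.injEq] at hx
  subst hx
  match n, hy with
  | 0, hy => simp [toTrailPt, segList] at hy
  | k + 1, hy =>
    rw [show ((M.B0.toTrailPt (zetaPt H σ)).1 (k+1)).1 = segList (zetaPt H σ).1 (k+1) from rfl,
      getLast?_segList, Option.mem_def, Option.some.injEq] at hy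
    subst hy
    have h1 : M.B0.refines (M.Frec (σ.1 (max (k+1) k)).1).1 (M.Frec (σ.1 (k+1)).1).1 :=
      M.Frec_refines_prefix (trail_prefix_mono σ (le_max_left _ _))
    have h2 : M.B0.refines (M.Frec (σ.1 (max (k+1) k)).1).1 (M.Frec (σ.1 k).1).1 :=
      M.Frec_refines_prefix (trail_prefix_mono σ (le_max_right _ _))
    exact M.B0.not_apart_of_lb h1 h2 hxy

lemma lastPoint_equiv_of_no_trail_apart (H : M.Hyp) {σ σ' : M.A.trailSpace.Pt}
    (h : ∀ n, ¬ M.A.trailSpace.apart (σ.1 n) (σ'.1 n)) :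
    M.A.pEquiv (M.A.lastPoint H.hmA σ) (M.A.lastPoint H.hmA σ') := by
  rintro ⟨n, hn⟩
  exact h n (M.A.trailSpace_apart_of_lastDot H.hmA hn)

/-- The master construction: a trail morphism inducing a given continuous map on
quotients, provided the target has a suitable morphism pair. -/
theorem master (H : M.Hyp) (v : M.B0.Pt → M.B.Pt)
    (Mv : RefMorphism M.B0.trailSpace M.B)
    (hMv : ∀ z, M.B.pEquiv (Mv.pointMap (M.B0.toTrailPt z)) (v z))
    (hvu : ∀ y, M.B.pEquiv (v (M.u y)) y) :
    ∃ f : M.A.Pt → M.B.Pt, M.A.IsNaturalMorphismMap M.B f ∧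
      ∀ p, Quotient.mk M.B.ptSetoid (f p) = M.Psi (Quotient.mk M.A.ptSetoid p) := by
  -- main equivalence for an arbitrary trail point
  have mainEq : ∀ σ : M.A.trailSpace.Pt,
      M.B.pEquiv (Mv.pointMap ⟨fun n => M.Gtrail (σ.1 n), isPoint_Gseq H σ⟩)
        ((M.Psi (Quotient.mk M.A.ptSetoid (M.A.lastPoint H.hmA σ))).out) := by
    intro σ
    have h1 : M.B.pEquiv (Mv.pointMap ⟨fun n => M.Gtrail (σ.1 n), isPoint_Gseq H σ⟩)
        (Mv.pointMap (M.B0.toTrailPt (zetaPt H σ))) :=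
      Mv.pointMap_preserves fun ⟨n, hap⟩ => Gseq_not_apart_T0zeta H σ n hap
    have h2 := hMv (zetaPt H σ)
    have h3 : M.B.pEquiv (v (zetaPt H σ))
        (v (M.u ((M.Psi (Quotient.mk M.A.ptSetoid (M.A.lastPoint H.hmA σ))).out))) := by
      have hz := zeta_equiv_ustar H σ
      have e1 := M.B.pEquiv_symm (hMv (zetaPt H σ))
      have e2 := Mv.pointMap_preserves (M.B0.toTrailPt_equiv_of_pEquiv hz)
      have e3 := hMv (M.u ((M.Psi (Quotient.mk M.A.ptSetoid (M.A.lastPoint H.hmA σ))).out))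
      exact M.B.pEquiv_trans (M.B.pEquiv_trans e1 e2) e3
    have h4 := hvu ((M.Psi (Quotient.mk M.A.ptSetoid (M.A.lastPoint H.hmA σ))).out)
    exact M.B.pEquiv_trans h1 (M.B.pEquiv_trans h2 (M.B.pEquiv_trans h3 h4))
  -- the trail morphism
  refine ⟨fun p => RefMorphism.pointMap
      { toFun := fun t => Mv.toFun (M.Gtrail t)
        maps_points := fun σ hσ => Mv.maps_points _ (isPoint_Gseq H ⟨σ, hσ⟩)
        reflects_apart := ?_ } (M.A.toTrailPt p), ?_, ?_⟩
  · -- reflects apartness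
    intro σ σ' hσ hσ' hap
    by_contra hno
    push_neg at hno
    have heq : M.A.pEquiv (M.A.lastPoint H.hmA ⟨σ, hσ⟩) (M.A.lastPoint H.hmA ⟨σ', hσ'⟩) :=
      lastPoint_equiv_of_no_trail_apart H fun n h => hno n h
    have hmk : M.Psi (Quotient.mk M.A.ptSetoid (M.A.lastPoint H.hmA ⟨σ, hσ⟩)) =
        M.Psi (Quotient.mk M.A.ptSetoid (M.A.lastPoint H.hmA ⟨σ', hσ'⟩)) := by
      rw [mk_eq_of_pEquiv M.A heq]
    have e1 := mainEq ⟨σ, hσ⟩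
    have e2 := mainEq ⟨σ', hσ'⟩
    rw [hmk] at e1
    have : M.B.pEquiv (Mv.pointMap ⟨fun n => M.Gtrail (σ n), isPoint_Gseq H ⟨σ, hσ⟩⟩)
        (Mv.pointMap ⟨fun n => M.Gtrail (σ' n), isPoint_Gseq H ⟨σ', hσ'⟩⟩) :=
      M.B.pEquiv_trans e1 (M.B.pEquiv_symm e2)
    exact this hap
  · -- natural morphism map
    right
    exact ⟨_, fun p => ⟨M.A.toTrailPt p, fun n => rfl, rfl⟩⟩
  · -- induces Psi on quotients
    intro p
    have h1 := mainEq (M.A.toTrailPt p)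
    have h2 : M.Psi (Quotient.mk M.A.ptSetoid (M.A.lastPoint H.hmA (M.A.toTrailPt p))) =
        M.Psi (Quotient.mk M.A.ptSetoid p) := by
      rw [mk_eq_of_pEquiv M.A (M.A.lastPoint_toTrailPt_equiv H.hmA p)]
    rw [h2] at h1
    have h3 := mk_eq_of_pEquiv M.B h1
    rw [Quotient.out_eq] at h3
    exact h3

end MasterData

lemma pEquiv_of_mk_eq {V : Type} (P : PreNaturalSpace V) {p q : P.Pt}
    (h : Quotient.mk P.ptSetoid p = Quotient.mk P.ptSetoid q) : P.pEquiv p q :=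
  Quotient.exact h

lemma out_equiv {V : Type} (P : PreNaturalSpace V) (p : P.Pt) :
    P.pEquiv ((Quotient.mk P.ptSetoid p).out) p :=
  Quotient.mk_out (s := P.ptSetoid) p

/-- One direction of Statement 7: a continuous map between the quotient spaces
lifts to a natural morphism map, provided the target is a basic neighborhood space. -/
lemma oneDirection {VA VB : Type} (A : PreNaturalSpace VA) (B : PreNaturalSpace VB)
    (hA : A.IsNaturalSpace) (hB : B.IsNaturalSpace) (hbnB : B.IsBasicNbhdSpace)
    (Ψ : Quotient A.ptSetoid → Quotient B.ptSetoid) (hΨ : Continuous Ψ) :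
    ∃ f : A.Pt → B.Pt, A.IsNaturalMorphismMap B f ∧
      ∀ p, Quotient.mk B.ptSetoid (f p) = Ψ (Quotient.mk A.ptSetoid p) := by
  classical
  obtain ⟨mA, hmA⟩ := hA.1
  obtain ⟨mB, hmB⟩ := hB.1
  obtain ⟨VW, B₀, hB₀nat, hB₀open, u, v, hu, hv, hvu, huv⟩ := hbnB
  obtain ⟨m0, hm0⟩ := hB₀nat.1
  haveI : Countable VW := B₀.countable'
  haveI : Nonempty VW := ⟨m0⟩
  obtain ⟨e, he⟩ := exists_surjective_nat (VW × VW)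
  -- trail refinements of u and v
  obtain ⟨Mu, hMu⟩ := exists_trailRef (P := B) (Q := B₀) hu hmB
  obtain ⟨Mv, hMv⟩ := exists_trailRef (P := B₀) (Q := B) hv hm0
  set M : MasterData VA VB VW :=
    { A := A, B := B, B0 := B₀, u := u, Psi := Ψ, m0 := m0, mA := mA, e := e } with hM
  have H : M.Hyp := by
    refine ⟨hm0, hmA, he, ?_, hΨ⟩
    intro β
    rw [isOpen_coinduced (f := Quotient.mk B.ptSetoid)]
    have hset : Quotient.mk B.ptSetoid ⁻¹' M.Dset β =
        (fun y => Mu.pointMap (B.toTrailPt y)) ⁻¹' B₀.barSet β := by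
      ext y
      show u (Quotient.mk B.ptSetoid y).out ∈ B₀.barSet β ↔ _
      have h1 : B.pEquiv ((Quotient.mk B.ptSetoid y).out) y := B.out_equiv y
      have h2 : B₀.pEquiv (u ((Quotient.mk B.ptSetoid y).out)) (u y) :=
        morphismMap_preserves hu hmB h1
      have h3 : B₀.pEquiv (Mu.pointMap (B.toTrailPt y)) (u y) := hMu y
      constructor
      · intro hh
        exact B₀.barSet_mem_of_equiv hh
          (B₀.pEquiv_trans h3 (B₀.pEquiv_symm h2))
      · intro hh
        exact B₀.barSet_mem_of_equiv hh
          (B₀.pEquiv_trans h2 (B₀.pEquiv_symm h3))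
    rw [hset]
    exact natOpen_preimage_trail B B₀ Mu (hB₀open β)
  exact MasterData.master H v Mv hMv hvu

end PreNaturalSpace

/-- classical: basic neighborhood spaces with homeomorphic quotient
spaces are isomorphic as natural spaces. -/
theorem stmt7 {V W : Type} (P : PreNaturalSpace V) (Q : PreNaturalSpace W)
    (hP : P.IsNaturalSpace) (hQ : Q.IsNaturalSpace)
    (hbnP : P.IsBasicNbhdSpace) (hbnQ : Q.IsBasicNbhdSpace)
    (h : Nonempty (Quotient P.ptSetoid ≃ₜ Quotient Q.ptSetoid)) :
    P.AreIsomorphic Q := by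
  obtain ⟨φ⟩ := h
  obtain ⟨f, hfmor, hfΨ⟩ :=
    PreNaturalSpace.oneDirection P Q hP hQ hbnQ (fun c => φ c) φ.continuous
  obtain ⟨g, hgmor, hgΨ⟩ :=
    PreNaturalSpace.oneDirection Q P hQ hP hbnP (fun c => φ.symm c) φ.symm.continuous
  refine ⟨f, g, hfmor, hgmor, ?_, ?_⟩
  · intro x
    apply P.pEquiv_of_mk_eq
    rw [hgΨ, hfΨ]
    simp
  · intro y
    apply Q.pEquiv_of_mk_eq
    rw [hfΨ, hgΨ]
    simp
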